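/- First integration lemma: Let α > 0, let F ⊂ X be a measurable subset, and let Φ be a nonnegative measurable function on X⁺. Then ∫_F ∬_{Γ^α(x)} Φ(y,t) dμ(y) dt dμ(x) ≤ ∬_{Γ^α(F)} Φ(y,t) V(y,αt) dμ(y) dt. -/

import Mathlib

open MeasureTheory Metric Set
open scoped ENNReal NNReal

noncomputable section

variable {X : Type*}

/-- The measure `dμ(y) dt/t` on `X⁺ = X × (0,∞)`, modelled on `X × ℝ`
(supported on `{t > 0}`). -/
def upHalf [MeasurableSpace X] (μ : Measure X) : Measure (X × ℝ) :=
  μ.prod ((volume.restrict (Set.Ioi (0:ℝ))).withDensity fun t => ENNReal.ofReal t⁻¹)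

/-- The measure `dμ(y) dt` on `X⁺` (supported on `{t > 0}`). -/
def upHalf' [MeasurableSpace X] (μ : Measure X) : Measure (X × ℝ) :=
  μ.prod (volume.restrict (Set.Ioi (0:ℝ)))

/-- Cone of aperture `α` with vertex `x`. -/
def coneAt [PseudoMetricSpace X] (α : ℝ) (x : X) : Set (X × ℝ) :=
  {p | dist p.1 x < α * p.2}

/-- Tent of aperture `α` over `O ⊆ X`: the complement in `X⁺` of the union of the
cones of aperture `α` with vertices outside `O`. -/
def tentOver [PseudoMetricSpace X] (α : ℝ) (O : Set X) : Set (X × ℝ) :=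
  {p | 0 < p.2 ∧ ∀ x ∉ O, α * p.2 ≤ dist p.1 x}

/-- The `α`-shadow of `C ⊆ X⁺`: points whose cone meets `C`. -/
def shadowOf [PseudoMetricSpace X] (α : ℝ) (C : Set (X × ℝ)) : Set X :=
  {x | ∃ p ∈ C, p ∈ coneAt α x}

/-- The operator `A_q^α`:
`A_q^α(f)(x) = (∬_{Γ^α(x)} |f(y,t)|^q dμ(y)/V(y,αt) dt/t)^{1/q}`. -/
def Afun [PseudoMetricSpace X] [MeasurableSpace X] (μ : Measure X) (q α : ℝ)
    (f : X × ℝ → ℝ) (x : X) : ℝ≥0∞ :=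
  (∫⁻ p in coneAt α x,
      ENNReal.ofReal (|f p| ^ q) / μ (ball p.1 (α * p.2)) ∂upHalf μ) ^ (1/q)

/-- The truncated operator `A_q^α(·|h)`, integrating over the truncated cone
`Γ_h^α(x)`. -/
def AfunT [PseudoMetricSpace X] [MeasurableSpace X] (μ : Measure X) (q α h : ℝ)
    (f : X × ℝ → ℝ) (x : X) : ℝ≥0∞ :=
  (∫⁻ p in coneAt α x ∩ {p : X × ℝ | p.2 < h},
      ENNReal.ofReal (|f p| ^ q) / μ (ball p.1 (α * p.2)) ∂upHalf μ) ^ (1/q)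

/-- The Carleson operator `C_q^α`:
`C_q^α(f)(x) = sup_{B ∋ x} (μ(B)⁻¹ ∬_{T^α(B)} |f(y,t)|^q dμ(y) dt/t)^{1/q}`,
the supremum being over open balls containing `x`. -/
def Cfun [PseudoMetricSpace X] [MeasurableSpace X] (μ : Measure X) (q α : ℝ)
    (f : X × ℝ → ℝ) (x : X) : ℝ≥0∞ :=
  ⨆ (z : X) (ρ : ℝ) (_ : 0 < ρ ∧ x ∈ ball z ρ),
    ((μ (ball z ρ))⁻¹ *
      ∫⁻ p in tentOver α (ball z ρ), ENNReal.ofReal (|f p| ^ q) ∂upHalf μ) ^ (1/q)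

/-- The tent space quasi-norm `‖f‖_{T^{p,q,α}} = ‖A_q^α(f)‖_{L^p(X)}`. -/
def tNorm [PseudoMetricSpace X] [MeasurableSpace X] (μ : Measure X) (p q α : ℝ)
    (f : X × ℝ → ℝ) : ℝ≥0∞ :=
  (∫⁻ x, Afun μ q α f x ^ p ∂μ) ^ (1/p)

/-- The uncentred Hardy–Littlewood maximal operator applied to an
`ℝ≥0∞`-valued function. -/
def maxFun [PseudoMetricSpace X] [MeasurableSpace X] (μ : Measure X)
    (g : X → ℝ≥0∞) (x : X) : ℝ≥0∞ :=
  ⨆ (z : X) (ρ : ℝ) (_ : 0 < ρ ∧ x ∈ ball z ρ),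
    (μ (ball z ρ))⁻¹ * ∫⁻ y in ball z ρ, g y ∂μ

/-- `μ` is doubling: `V(x,2r) ≤ C V(x,r)` for all `x`, `r > 0`. -/
def DoublingMeas [PseudoMetricSpace X] [MeasurableSpace X] (μ : Measure X) : Prop :=
  ∃ C > (0:ℝ), ∀ (x : X) (r : ℝ), 0 < r →
    μ (ball x (2 * r)) ≤ ENNReal.ofReal C * μ (ball x r)

/-- A metric space carrying a σ-finite Borel measure that is positive on all balls
is second countable. -/
theorem secondCountable_of_sigmaFinite_posBalls [MetricSpace X] [MeasurableSpace X]
    [BorelSpace X] (μ : Measure X) [SigmaFinite μ]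
    (hpos : ∀ (x : X) (r : ℝ), 0 < r → 0 < μ (ball x r)) :
    SecondCountableTopology X := by
  apply Metric.secondCountable_of_almost_dense_set
  intro ε hε
  -- take a maximal ε-separated set
  have hchains : ∀ c ⊆ {s : Set X | ∀ x ∈ s, ∀ y ∈ s, x ≠ y → ε ≤ dist x y},
      IsChain (· ⊆ ·) c → ∃ ub ∈ {s : Set X | ∀ x ∈ s, ∀ y ∈ s, x ≠ y → ε ≤ dist x y},
        ∀ s ∈ c, s ⊆ ub := by
    intro c hc hchain
    refine ⟨⋃₀ c, ?_, fun t ht => Set.subset_sUnion_of_mem ht⟩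
    rintro x ⟨t, htc, hxt⟩ y ⟨u, huc, hyu⟩ hxy
    rcases hchain.total htc huc with h | h
    · exact (hc huc) x (h hxt) y hyu hxy
    · exact (hc htc) x hxt y (h hyu) hxy
  obtain ⟨s, hs⟩ := zorn_subset {s : Set X | ∀ x ∈ s, ∀ y ∈ s, x ≠ y → ε ≤ dist x y} hchains
  · have hsep : ∀ x ∈ s, ∀ y ∈ s, x ≠ y → ε ≤ dist x y := hs.prop
    refine ⟨s, ?_, ?_⟩
    · -- countability: the balls of radius ε/2 around points of s are disjoint
      have hdisj : Pairwise (Function.onFun Disjoint fun x : s => ball (x : X) (ε / 2)) := by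
        intro x y hxy
        apply Set.disjoint_left.2
        intro z hz1 hz2
        have h1 : ε ≤ dist (x : X) (y : X) :=
          hsep x x.2 y y.2 (fun h => hxy (Subtype.ext h))
        have : dist (x : X) (y : X) < ε := by
          calc dist (x : X) (y : X) ≤ dist (x : X) z + dist z (y : X) := dist_triangle _ _ _
            _ < ε / 2 + ε / 2 := by
                rw [mem_ball] at hz1 hz2
                exact add_lt_add (by rwa [dist_comm]) hz2
            _ = ε := by ring
        linarith
      have hcc : Set.Countable {i : s | 0 < μ (ball (i : X) (ε / 2))} :=
        MeasureTheory.Measure.countable_meas_pos_of_disjoint_iUnion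
          (fun i => measurableSet_ball) hdisj
      have : {i : s | 0 < μ (ball (i : X) (ε / 2))} = Set.univ := by
        ext i; simp [hpos (i : X) (ε / 2) (by linarith)]
      rw [this] at hcc
      haveI : Countable s := Set.countable_univ_iff.mp hcc
      exact Set.countable_coe_iff.mp this
    · -- ε-density by maximality
      intro x
      by_contra hcon
      push_neg at hcon
      have hxs : x ∉ s := by
        intro hx
        have := hcon x hx
        rw [dist_self] at this
        linarith
      have hins : insert x s ∈ {s : Set X | ∀ x ∈ s, ∀ y ∈ s, x ≠ y → ε ≤ dist x y} := by
        intro a ha b hb hab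
        rcases ha with rfl | ha
        · rcases hb with rfl | hb
          · exact absurd rfl hab
          · exact le_of_lt (hcon b hb)
        · rcases hb with rfl | hb
          · rw [dist_comm]; exact le_of_lt (hcon a ha)
          · exact hsep a ha b hb hab
      have := hs.eq_of_subset hins (Set.subset_insert x s)
      exact hxs (this ▸ Set.mem_insert x s)

/-- **First integration lemma.** For `α > 0`, `F ⊆ X` measurable and
`Φ : X⁺ → [0,∞]` measurable,
`∫_F ∬_{Γ^α(x)} Φ(y,t) dμ(y) dt dμ(x) ≤ ∬_{Γ^α(F)} Φ(y,t) V(y,αt) dμ(y) dt`. -/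
theorem first_integration_lemma [MetricSpace X] [MeasurableSpace X] [BorelSpace X]
    (μ : Measure X) [SigmaFinite μ]
    (hpos : ∀ (x : X) (r : ℝ), 0 < r → 0 < μ (ball x r))
    (hfin : ∀ (x : X) (r : ℝ), 0 < r → μ (ball x r) < ∞)
    (α : ℝ) (hα : 0 < α) (F : Set X) (hF : MeasurableSet F)
    (Φ : X × ℝ → ℝ≥0∞) (hΦ : Measurable Φ) :
    ∫⁻ x in F, ∫⁻ p in coneAt α x, Φ p ∂upHalf' μ ∂μ
      ≤ ∫⁻ p in ⋃ x ∈ F, coneAt α x, Φ p * μ (ball p.1 (α * p.2)) ∂upHalf' μ := by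
  haveI : SecondCountableTopology X := secondCountable_of_sigmaFinite_posBalls μ hpos
  set ν := upHalf' μ with hν
  haveI hνSF : SigmaFinite ν := by
    rw [hν]; unfold upHalf'; infer_instance
  have hconeOpen : ∀ x : X, IsOpen (coneAt α x) := by
    intro x
    exact isOpen_lt (Continuous.dist (continuous_fst) continuous_const)
      (continuous_const.mul continuous_snd)
  have hconeMeas : ∀ x : X, MeasurableSet (coneAt α x) :=
    fun x => (hconeOpen x).measurableSet
  -- Step 1: rewrite inner integrals as integrals of indicators
  have step1 : ∀ x : X, ∫⁻ p in coneAt α x, Φ p ∂ν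
      = ∫⁻ p, (coneAt α x).indicator Φ p ∂ν :=
    fun x => (lintegral_indicator (hconeMeas x) Φ).symm
  rw [lintegral_congr step1]
  -- Step 2: swap the order of integration (Tonelli)
  have hE : MeasurableSet {q : X × (X × ℝ) | dist q.2.1 q.1 < α * q.2.2} := by
    apply measurableSet_lt
    · exact (Continuous.dist (continuous_fst.comp continuous_snd)
        continuous_fst).measurable
    · exact (continuous_const.mul (continuous_snd.comp continuous_snd)).measurable
  have huncurry : Function.uncurry (fun (x : X) (p : X × ℝ) => (coneAt α x).indicator Φ p)
      = Set.indicator {q : X × (X × ℝ) | dist q.2.1 q.1 < α * q.2.2} (fun q => Φ q.2) := by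
    funext q
    simp only [Function.uncurry, Set.indicator_apply, coneAt, Set.mem_setOf_eq]
  have hm : AEMeasurable (Function.uncurry fun (x : X) (p : X × ℝ) =>
      (coneAt α x).indicator Φ p) ((μ.restrict F).prod ν) := by
    rw [huncurry]
    exact ((hΦ.comp measurable_snd).indicator hE).aemeasurable
  rw [lintegral_lintegral_swap hm]
  -- Step 3: compute the inner integral over x
  have inner : ∀ p : X × ℝ, ∫⁻ x, (coneAt α x).indicator Φ p ∂(μ.restrict F)
      = Φ p * μ (ball p.1 (α * p.2) ∩ F) := by
    intro p
    have heq : (fun x => (coneAt α x).indicator Φ p)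
        = (ball p.1 (α * p.2)).indicator (fun _ => Φ p) := by
      funext x
      by_cases hx : dist p.1 x < α * p.2
      · rw [Set.indicator_of_mem (show p ∈ coneAt α x from hx),
          Set.indicator_of_mem (show x ∈ ball p.1 (α * p.2) from mem_ball.mpr
            (by rwa [dist_comm]))]
      · rw [Set.indicator_of_notMem (show p ∉ coneAt α x from hx),
          Set.indicator_of_notMem (show x ∉ ball p.1 (α * p.2) from fun h =>
            hx (by rw [dist_comm]; exact mem_ball.mp h))]
    rw [heq, lintegral_indicator measurableSet_ball, setLIntegral_const,
      Measure.restrict_apply measurableSet_ball]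
  rw [lintegral_congr inner]
  -- Step 4: bound by the integral over the union of cones
  set S : Set (X × ℝ) := ⋃ x ∈ F, coneAt α x with hS
  have hSmeas : MeasurableSet S :=
    (isOpen_biUnion fun x _ => hconeOpen x).measurableSet
  have hvanish : ∀ p : X × ℝ, p ∉ S → μ (ball p.1 (α * p.2) ∩ F) = 0 := by
    intro p hp
    have : ball p.1 (α * p.2) ∩ F = ∅ := by
      ext x
      simp only [Set.mem_inter_iff, mem_ball, Set.mem_empty_iff_false, iff_false]
      rintro ⟨hx1, hx2⟩
      exact hp (Set.mem_biUnion hx2 (by simpa [coneAt, dist_comm] using hx1))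
    simp [this]
  have hind : (fun p : X × ℝ => Φ p * μ (ball p.1 (α * p.2) ∩ F))
      = S.indicator (fun p => Φ p * μ (ball p.1 (α * p.2) ∩ F)) := by
    funext p
    by_cases hp : p ∈ S
    · simp [Set.indicator_of_mem hp]
    · simp [Set.indicator_of_notMem hp, hvanish p hp]
  rw [hind, lintegral_indicator hSmeas]
  exact lintegral_mono fun p => mul_le_mul_right (measure_mono Set.inter_subset_left) (Φ p)
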